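/- With ω = e^{2πi/3} and the endpoint map E as above, for all n ≥ 0 and λ₁, …, λₙ ∈ {−1,+1}, the modulus of E(T_{λ₁⋯λₙ}) equals (√3)ⁿ. -/

import Mathlib

/-- Auxiliary recursion: the head of the list is the last parameter λₙ. -/
def foldTAux : List ℤ → List ℤ
  | [] => []
  | lam :: L => foldTAux L ++ [lam] ++ foldTAux L ++ [-lam] ++ foldTAux L

/-- `foldT [λ₁, …, λₙ]` is the terdragon-type folding sequence `T_{λ₁⋯λₙ}`,
satisfying `foldT [] = []` and
`foldT (Λ ++ [μ]) = foldT Λ ++ [μ] ++ foldT Λ ++ [-μ] ++ foldT Λ`. -/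
def foldT (Λ : List ℤ) : List ℤ := foldTAux Λ.reverse

/-- The primitive cube root of unity `ω = e^{2πi/3}`. -/
noncomputable def ω : ℂ := Complex.exp (2 * Real.pi * Complex.I / 3)

/-- The endpoint of the unit-step path with turning sequence `a`. -/
noncomputable def endpointT (a : List ℤ) : ℂ :=
  ((List.range (a.length + 1)).map (fun j => ω ^ ((a.take j).sum))).sum

lemma omega_ne_zero : ω ≠ 0 := Complex.exp_ne_zero _

lemma endpointT_nil : endpointT [] = 1 := by
  simp [endpointT]

lemma endpointT_cons (x : ℤ) (a : List ℤ) :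
    endpointT (x :: a) = 1 + ω ^ x * endpointT a := by
  unfold endpointT
  rw [show (x :: a).length + 1 = (a.length + 1) + 1 from rfl,
    List.range_succ_eq_map]
  simp [List.map_map, Function.comp_def, List.take_succ_cons, zpow_add₀ omega_ne_zero,
    List.sum_map_mul_left]

lemma endpointT_append (a b : List ℤ) :
    endpointT (a ++ b) = endpointT a + ω ^ a.sum * (endpointT b - 1) := by
  induction a with
  | nil => simp [endpointT_nil]
  | cons x a ih =>
      simp only [List.cons_append, endpointT_cons, ih, List.sum_cons,
        zpow_add₀ omega_ne_zero]
      ring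

lemma sum_foldTAux (L : List ℤ) : (foldTAux L).sum = 0 := by
  induction L with
  | nil => simp [foldTAux]
  | cons x L ih => simp [foldTAux, ih]

lemma endpointT_foldTAux_cons (x : ℤ) (L : List ℤ) :
    endpointT (foldTAux (x :: L)) = (2 + ω ^ x) * endpointT (foldTAux L) := by
  have h := sum_foldTAux L
  simp only [foldTAux, endpointT_append, endpointT_cons, endpointT_nil, h,
    List.sum_append, List.sum_cons, List.sum_nil, zpow_add₀ omega_ne_zero,
    zpow_zero, zpow_neg]
  have hne : ω ^ x ≠ 0 := zpow_ne_zero x omega_ne_zero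
  field_simp
  ring

lemma abs_two_add_omega : ‖2 + ω‖ = Real.sqrt 3 := by
  have h : ω = Complex.exp ((2 * Real.pi / 3 : ℝ) * Complex.I) := by
    rw [ω]; congr 1; push_cast; ring
  have hre : (2 + ω).re = 3 / 2 := by
    have hc : Real.cos (2 * Real.pi / 3) = -(1/2) := by
      rw [show 2 * Real.pi / 3 = Real.pi - Real.pi / 3 by ring, Real.cos_pi_sub,
        Real.cos_pi_div_three]
    rw [h]
    simp only [Complex.add_re, Complex.exp_ofReal_mul_I_re, hc]
    norm_num
  have him : (2 + ω).im = Real.sqrt 3 / 2 := by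
    have hs : Real.sin (2 * Real.pi / 3) = Real.sqrt 3 / 2 := by
      rw [show 2 * Real.pi / 3 = Real.pi - Real.pi / 3 by ring, Real.sin_pi_sub,
        Real.sin_pi_div_three]
    rw [h]
    simp only [Complex.add_im, Complex.exp_ofReal_mul_I_im, hs]
    norm_num
  rw [Complex.norm_def, Complex.normSq_apply, hre, him]
  rw [show (3:ℝ)/2 * (3/2) + Real.sqrt 3 / 2 * (Real.sqrt 3 / 2)
      = 9/4 + (Real.sqrt 3 * Real.sqrt 3) / 4 by ring,
    Real.mul_self_sqrt (by norm_num)]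
  norm_num

lemma abs_two_add_omega_zpow (x : ℤ) (hx : x = 1 ∨ x = -1) :
    ‖2 + ω ^ x‖ = Real.sqrt 3 := by
  rcases hx with rfl | rfl
  · simpa using abs_two_add_omega
  · have habs : ‖ω‖ = 1 := by
      rw [ω]
      rw [show 2 * Real.pi * Complex.I / 3 = (2 * Real.pi / 3 : ℝ) * Complex.I by
        push_cast; ring]
      exact Complex.norm_exp_ofReal_mul_I _
    have hconj : (starRingEnd ℂ) (2 + ω) = 2 + ω ^ (-1 : ℤ) := by
      rw [zpow_neg, zpow_one,
        Complex.inv_eq_conj (by rw [habs]), map_add, map_ofNat]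
    rw [← hconj, Complex.norm_conj]
    exact abs_two_add_omega

lemma abs_endpoint_aux (L : List ℤ) (hL : ∀ x ∈ L, x = 1 ∨ x = -1) :
    ‖endpointT (foldTAux L)‖ = (Real.sqrt 3) ^ L.length := by
  induction L with
  | nil => simp [foldTAux, endpointT_nil]
  | cons x L ih =>
      rw [endpointT_foldTAux_cons, norm_mul,
        abs_two_add_omega_zpow x (hL x (by simp)),
        ih (fun y hy => hL y (by simp [hy]))]
      simp [pow_succ]
      ring

theorem abs_endpoint_foldT (Λ : List ℤ) (hΛ : ∀ x ∈ Λ, x = 1 ∨ x = -1) :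
    ‖endpointT (foldT Λ)‖ = (Real.sqrt 3) ^ Λ.length := by
  rw [foldT, ← Λ.length_reverse]
  exact abs_endpoint_aux Λ.reverse (fun x hx => hΛ x (List.mem_reverse.mp hx))
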